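/- (Theorem 2: bias of the normalized IPW estimator under a misspecified propensity score.) Under no unmeasured confounding and the stated overlap conditions, E[T/e*(X)] = E[e(X)/e*(X)] and E[(1−T)/(1−e*(X))] = E[(1−e(X))/(1−e*(X))], both strictly positive, and the probability limit of the normalized IPW estimator minus the average causal effect equals E[T·Y/e*(X)]/E[T/e*(X)] − E[(1−T)·Y/(1−e*(X))]/E[(1−T)/(1−e*(X))] − Δ = E[(e(X)/e*(X))·μ1(X)]/E[e(X)/e*(X)] − E[((1−e(X))/(1−e*(X)))·μ0(X)]/E[(1−e(X))/(1−e*(X))] − (μ1 − μ0). -/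

import Mathlib

open MeasureTheory ProbabilityTheory

section Auxiliary

variable {Ω : Type*} {m' : MeasurableSpace Ω} {mΩ : MeasurableSpace Ω} [StandardBorelSpace Ω]
  {μ : Measure Ω} [IsFiniteMeasure μ]

/-- a.e. equality transfers to the conditional expectation kernel, trim-a.e. -/
lemma ae_trim_condexpKernel_ae_eq (hm' : m' ≤ mΩ) {β : Type*} {f g : Ω → β}
    (h : ∀ᵐ ω ∂μ, f ω = g ω) :
    ∀ᵐ ω ∂(μ.trim hm'), f =ᵐ[condExpKernel μ m' ω] g := by
  obtain ⟨N, hsub, hNmeas, hNnull⟩ := exists_measurable_superset_of_null (ae_iff.mp h)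
  have h0 : (N.indicator (fun _ => (1:ℝ))) =ᵐ[μ] 0 := by
    rw [Filter.EventuallyEq, ae_iff]
    refine measure_mono_null (fun x hx => ?_) hNnull
    simp only [Set.mem_setOf_eq] at hx
    by_contra hxN
    exact hx (by simp [Set.indicator_of_notMem hxN])
  have hcond : (μ⟦N | m'⟧) =ᵐ[μ] 0 :=
    (condExp_congr_ae h0).trans (by rw [condExp_zero])
  have h2 := (condExpKernel_ae_eq_condExp hm' hNmeas).trans hcond
  have h3 : ∀ᵐ ω ∂μ, condExpKernel μ m' ω N = 0 := by
    filter_upwards [h2] with ω hω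
    have hfin : condExpKernel μ m' ω N ≠ ⊤ := measure_ne_top _ _
    simpa [Measure.real, ENNReal.toReal_eq_zero_iff, hfin] using hω
  have hmeas : MeasurableSet[m'] {ω | condExpKernel μ m' ω N = 0} :=
    measurable_condExpKernel (μ := μ) hNmeas (measurableSet_singleton 0)
  have h4 : ∀ᵐ ω ∂(μ.trim hm'), condExpKernel μ m' ω N = 0 := by
    rw [ae_iff]
    have he : {ω | ¬ condExpKernel μ m' ω N = 0} = {ω | condExpKernel μ m' ω N = 0}ᶜ := rfl
    rw [he, trim_measurableSet_eq hm' hmeas.compl]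
    exact ae_iff.mp h3
  filter_upwards [h4] with ω hω
  refine measure_mono_null (fun x hx => hsub hx) hω


variable {Ω : Type*} {m' : MeasurableSpace Ω} {mΩ : MeasurableSpace Ω}
  {μ : Measure Ω} [IsFiniteMeasure μ]

/-- conditional expectation of `A.indicator f` factorizes under conditional independence
of the generated σ-algebras, expressed through hypothesis `H`. -/
lemma condExp_indicator_mul_of_factorize (hm' : m' ≤ mΩ)
    {A : Set Ω} (hA : MeasurableSet A)
    {f : Ω → ℝ} (hf : Measurable f) (hfint : Integrable f μ)
    (H : ∀ s : Set ℝ, MeasurableSet s →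
      (μ⟦f ⁻¹' s ∩ A | m'⟧) =ᵐ[μ] fun ω => (μ⟦f ⁻¹' s | m'⟧) ω * (μ⟦A | m'⟧) ω) :
    μ[A.indicator f | m'] =ᵐ[μ] fun ω => (μ⟦A | m'⟧) ω * (μ[f | m']) ω := by
  set eA : Ω → ℝ := μ⟦A | m'⟧ with heAdef
  have heA_sm : StronglyMeasurable[m'] eA := stronglyMeasurable_condExp
  have heA_b : ∀ᵐ ω ∂μ, ‖eA ω‖ ≤ 1 := by
    have h0 : 0 ≤ᵐ[μ] eA :=
      condExp_nonneg (Filter.Eventually.of_forall fun ω =>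
        Set.indicator_nonneg (fun _ _ => zero_le_one) ω)
    have h1 : eA ≤ᵐ[μ] fun _ => (1:ℝ) := by
      have hmono := condExp_mono (m := m') (μ := μ)
        ((integrable_const (1:ℝ)).indicator hA) (integrable_const (1:ℝ))
        (Filter.Eventually.of_forall fun ω =>
          Set.indicator_le_self' (fun _ _ => zero_le_one) ω)
      refine hmono.trans ?_
      rw [condExp_const hm']
    filter_upwards [h0, h1] with ω hω0 hω1
    simp only [Pi.zero_apply] at hω0
    rw [Real.norm_eq_abs, abs_le]
    exact ⟨by linarith, hω1⟩
  have hmul : ∀ {h : Ω → ℝ}, Integrable h μ → Integrable (fun ω => eA ω * h ω) μ :=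
    fun hint => hint.bdd_mul ((heA_sm.mono hm').aestronglyMeasurable) heA_b
  -- main induction over f
  have main : ∀ s, MeasurableSet[m'] s →
      ∫ ω in s, eA ω * f ω ∂μ = ∫ ω in s, A.indicator f ω ∂μ := by
    have hm₁ : MeasurableSpace.comap f inferInstance ≤ mΩ := hf.comap_le
    have hfm₁ : StronglyMeasurable[MeasurableSpace.comap f inferInstance] f :=
      Measurable.stronglyMeasurable (fun s hs => ⟨s, hs, rfl⟩)
    refine MemLp.induction_stronglyMeasurable hm₁ ENNReal.one_ne_top
      (fun u => ∀ s, MeasurableSet[m'] s →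
        ∫ ω in s, eA ω * u ω ∂μ = ∫ ω in s, A.indicator u ω ∂μ)
      ?_ ?_ ?_ ?_ (memLp_one_iff_integrable.2 hfint) hfm₁.aestronglyMeasurable
    · -- indicator case
      rintro c t ⟨s, hs, rfl⟩ hμt s' hs'
      set t : Set Ω := f ⁻¹' s with htdef
      have htm : MeasurableSet t := hf hs
      have h1t_int : Integrable (t.indicator fun _ => (1:ℝ)) μ := (integrable_const 1).indicator htm
      have hpull := condExp_mul_of_stronglyMeasurable_left heA_sm
        (hmul h1t_int) h1t_int
      have hcore : ∫ ω in s', eA ω * t.indicator (fun _ => (1:ℝ)) ω ∂μ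
          = ∫ ω in s', (t ∩ A).indicator (fun _ => (1:ℝ)) ω ∂μ := by
        calc ∫ ω in s', eA ω * t.indicator (fun _ => (1:ℝ)) ω ∂μ
            = ∫ ω in s', (μ[fun ω => eA ω * t.indicator (fun _ => (1:ℝ)) ω | m']) ω ∂μ :=
              (setIntegral_condExp hm' (hmul h1t_int) hs').symm
          _ = ∫ ω in s', (μ⟦t ∩ A | m'⟧) ω ∂μ := by
              refine setIntegral_congr_ae (hm' _ hs') ?_
              filter_upwards [hpull, H s hs] with ω h1 h2 _
              have : (μ[(fun ω => eA ω * t.indicator (fun _ => (1:ℝ)) ω) | m']) ω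
                  = eA ω * (μ⟦t | m'⟧) ω := by
                exact h1
              rw [this, mul_comm, ← h2]
          _ = ∫ ω in s', (t ∩ A).indicator (fun _ => (1:ℝ)) ω ∂μ :=
              setIntegral_condExp hm' ((integrable_const 1).indicator (htm.inter hA)) hs'
      have e1 : (fun ω => eA ω * t.indicator (fun _ => c) ω)
          = fun ω => c * (eA ω * t.indicator (fun _ => (1:ℝ)) ω) := by
        funext ω; by_cases h : ω ∈ t <;> simp [h] <;> ring
      have e2 : (fun ω => A.indicator (t.indicator fun _ => c) ω)
          = fun ω => c * ((t ∩ A).indicator (fun _ => (1:ℝ)) ω) := by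
        funext ω
        by_cases h1 : ω ∈ A <;> by_cases h2 : ω ∈ t <;>
          simp [Set.indicator, h1, h2, Set.mem_inter_iff]
      rw [show (∫ ω in s', eA ω * t.indicator (fun _ => c) ω ∂μ)
          = ∫ ω in s', c * (eA ω * t.indicator (fun _ => (1:ℝ)) ω) ∂μ by rw [← e1],
        show (∫ ω in s', A.indicator (t.indicator fun _ => c) ω ∂μ)
          = ∫ ω in s', c * ((t ∩ A).indicator (fun _ => (1:ℝ)) ω) ∂μ by rw [← e2],
        integral_const_mul, integral_const_mul, hcore]
    · -- additivity
      intro u v hdisj hu hv hum hvm hPu hPv s hs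
      have hui := memLp_one_iff_integrable.mp hu
      have hvi := memLp_one_iff_integrable.mp hv
      calc ∫ ω in s, eA ω * (u + v) ω ∂μ
          = ∫ ω in s, (eA ω * u ω + eA ω * v ω) ∂μ := by
            simp only [Pi.add_apply, mul_add]
        _ = (∫ ω in s, eA ω * u ω ∂μ) + ∫ ω in s, eA ω * v ω ∂μ :=
            integral_add ((hmul hui).integrableOn) ((hmul hvi).integrableOn)
        _ = (∫ ω in s, A.indicator u ω ∂μ) + ∫ ω in s, A.indicator v ω ∂μ := by
            rw [hPu s hs, hPv s hs]
        _ = ∫ ω in s, (A.indicator u ω + A.indicator v ω) ∂μ :=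
            (integral_add ((hui.indicator hA).integrableOn)
              ((hvi.indicator hA).integrableOn)).symm
        _ = ∫ ω in s, A.indicator (u + v) ω ∂μ := by
            rw [show A.indicator (u + v) = A.indicator u + A.indicator v from
              Set.indicator_add A u v]
            rfl
    · -- closedness
      have hset : {u : lpMeas ℝ ℝ (MeasurableSpace.comap f inferInstance) 1 μ |
            ∀ s, MeasurableSet[m'] s →
              ∫ ω in s, eA ω * (u : Ω → ℝ) ω ∂μ = ∫ ω in s, A.indicator (u : Ω → ℝ) ω ∂μ}
          = ⋂ (s : Set Ω) (_ : MeasurableSet[m'] s),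
            {u : lpMeas ℝ ℝ (MeasurableSpace.comap f inferInstance) 1 μ |
              ∫ ω in s, eA ω * (u : Ω → ℝ) ω ∂μ = ∫ ω in s, A.indicator (u : Ω → ℝ) ω ∂μ} := by
        ext u; simp [Set.mem_iInter]
      rw [hset]
      refine isClosed_iInter fun s => isClosed_iInter fun hs => isClosed_eq ?_ ?_
      · -- continuity of u ↦ ∫_s eA * u
        have hlip : LipschitzWith 1 (fun v : Lp ℝ 1 μ => ∫ ω in s, eA ω * v ω ∂μ) := by
          refine LipschitzWith.of_dist_le_mul fun v w => ?_
          have hvi : Integrable (v : Ω → ℝ) μ := L1.integrable_coeFn v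
          have hwi : Integrable (w : Ω → ℝ) μ := L1.integrable_coeFn w
          have hsub : ((v - w : Lp ℝ 1 μ) : Ω → ℝ) =ᵐ[μ] fun ω => v ω - w ω := Lp.coeFn_sub v w
          have h1 : (∫ ω in s, eA ω * v ω ∂μ) - ∫ ω in s, eA ω * w ω ∂μ
              = ∫ ω in s, eA ω * (v ω - w ω) ∂μ := by
            rw [← integral_sub ((hmul hvi).integrableOn) ((hmul hwi).integrableOn)]
            simp [mul_sub]
          rw [Real.dist_eq, h1]
          push_cast
          rw [one_mul]
          have h2 : |∫ ω in s, eA ω * (v ω - w ω) ∂μ| ≤ ∫ ω in s, |eA ω * (v ω - w ω)| ∂μ :=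
            (by simpa only [Real.norm_eq_abs] using norm_integral_le_integral_norm (μ := μ.restrict s) (fun ω => eA ω * (v ω - w ω)))
          have h3 : ∫ ω in s, |eA ω * (v ω - w ω)| ∂μ ≤ ∫ ω in s, |v ω - w ω| ∂μ := by
            refine integral_mono_ae ((hmul (hvi.sub hwi)).abs).integrableOn
              ((hvi.sub hwi).abs).integrableOn ?_
            refine ae_restrict_of_ae ?_
            filter_upwards [heA_b] with ω hb
            rw [abs_mul]
            exact mul_le_of_le_one_left (abs_nonneg _) (by simpa using hb)
          have h4 : ∫ ω in s, |v ω - w ω| ∂μ ≤ ∫ ω, |v ω - w ω| ∂μ :=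
            setIntegral_le_integral ((hvi.sub hwi).abs)
              (Filter.Eventually.of_forall fun ω => abs_nonneg _)
          have h5 : ∫ ω, |v ω - w ω| ∂μ = dist v w := by
            rw [dist_eq_norm, L1.norm_eq_integral_norm]
            refine integral_congr_ae ?_
            filter_upwards [hsub] with ω hω
            rw [Real.norm_eq_abs, hω]
          calc |∫ ω in s, eA ω * (v ω - w ω) ∂μ| ≤ ∫ ω in s, |eA ω * (v ω - w ω)| ∂μ := h2
            _ ≤ ∫ ω in s, |v ω - w ω| ∂μ := h3
            _ ≤ ∫ ω, |v ω - w ω| ∂μ := h4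
            _ = dist v w := h5
        have heq : (fun u : lpMeas ℝ ℝ (MeasurableSpace.comap f inferInstance) 1 μ =>
              ∫ ω in s, eA ω * (u : Ω → ℝ) ω ∂μ)
            = (fun v : Lp ℝ 1 μ => ∫ ω in s, eA ω * v ω ∂μ) ∘
              (Submodule.subtypeL (lpMeas ℝ ℝ (MeasurableSpace.comap f inferInstance) 1 μ)) := rfl
        rw [heq]
        exact hlip.continuous.comp (ContinuousLinearMap.continuous _)
      · -- continuity of u ↦ ∫_s A.indicator u
        have heq : (fun u : lpMeas ℝ ℝ (MeasurableSpace.comap f inferInstance) 1 μ =>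
              ∫ ω in s, A.indicator (u : Ω → ℝ) ω ∂μ)
            = (fun v : Lp ℝ 1 μ => ∫ ω in s ∩ A, v ω ∂μ) ∘
              (Submodule.subtypeL (lpMeas ℝ ℝ (MeasurableSpace.comap f inferInstance) 1 μ)) := by
          funext u
          exact setIntegral_indicator hA
        rw [heq]
        exact (continuous_setIntegral _).comp (ContinuousLinearMap.continuous _)
    · -- respects a.e. equality
      intro u v huv hu hPu s hs
      have h1 : ∫ ω in s, eA ω * v ω ∂μ = ∫ ω in s, eA ω * u ω ∂μ := by
        refine integral_congr_ae (ae_restrict_of_ae ?_)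
        filter_upwards [huv] with ω hω; rw [hω]
      have h2 : ∫ ω in s, A.indicator u ω ∂μ = ∫ ω in s, A.indicator v ω ∂μ := by
        refine integral_congr_ae (ae_restrict_of_ae ?_)
        filter_upwards [huv] with ω hω
        by_cases h : ω ∈ A <;> simp [Set.indicator, h, hω]
      rw [h1, hPu s hs, h2]
  -- conclude via uniqueness of conditional expectation
  have hpull := condExp_mul_of_stronglyMeasurable_left heA_sm
    (hmul hfint) hfint
  refine (ae_eq_condExp_of_forall_setIntegral_eq hm' (hfint.indicator hA)
    (fun s hs hμs => (hmul integrable_condExp).integrableOn)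
    (fun s hs hμs => ?_) ?_).symm
  · calc ∫ ω in s, eA ω * (μ[f | m']) ω ∂μ
        = ∫ ω in s, (μ[fun ω => eA ω * f ω | m']) ω ∂μ := by
          refine setIntegral_congr_ae (hm' _ hs) ?_
          filter_upwards [hpull] with ω h _
          have : (μ[(fun ω => eA ω * f ω) | m']) ω = eA ω * (μ[f | m']) ω := by
            exact h
          rw [this]
      _ = ∫ ω in s, eA ω * f ω ∂μ := setIntegral_condExp hm' (hmul hfint) hs
      _ = ∫ ω in s, A.indicator f ω ∂μ := main s hs
  · exact (heA_sm.mul stronglyMeasurable_condExp).aestronglyMeasurable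

end Auxiliary

theorem bias_ipw2_aux
    {Ω : Type*} {m' : MeasurableSpace Ω} {mΩ : MeasurableSpace Ω} [StandardBorelSpace Ω]
    (hm' : m' ≤ mΩ)
    (μ : Measure Ω) [IsProbabilityMeasure μ]
    (T Y0 Y1 : Ω → ℝ)
    (hT01 : ∀ ω, T ω = 0 ∨ T ω = 1)
    (hY0int : Integrable Y0 μ) (hY1int : Integrable Y1 μ)
    (Y : Ω → ℝ) (hY : Y = fun ω => T ω * Y1 ω + (1 - T ω) * Y0 ω)
    (hNUC0 : CondIndepFun m' hm' Y0 T μ)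
    (hNUC1 : CondIndepFun m' hm' Y1 T μ)
    (eX : Ω → ℝ) (heX : eX =ᵐ[μ] μ[T | m'])
    (μ0X : Ω → ℝ) (hμ0X : μ0X =ᵐ[μ] μ[Y0 | m'])
    (μ1X : Ω → ℝ) (hμ1X : μ1X =ᵐ[μ] μ[Y1 | m'])
    (η : ℝ) (hη : 0 < η)
    (hover : ∀ᵐ ω ∂μ, η < eX ω ∧ eX ω < 1 - η)
    (G : Ω → ℝ) (hGm' : Measurable[m'] G)
    (ν : ℝ) (hν : 0 < ν)
    (hover' : ∀ᵐ ω ∂μ, ν < G ω ∧ G ω < 1 - ν)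
    (hint1 : Integrable (fun ω => T ω * Y ω / G ω) μ)
    (hint2 : Integrable (fun ω => (1 - T ω) * Y ω / (1 - G ω)) μ)
    (hint5 : Integrable (fun ω => T ω / G ω) μ)
    (hint6 : Integrable (fun ω => (1 - T ω) / (1 - G ω)) μ)
    (hint7 : Integrable (fun ω => eX ω / G ω) μ)
    (hint8 : Integrable (fun ω => (1 - eX ω) / (1 - G ω)) μ) :
    (∫ ω, T ω / G ω ∂μ) = (∫ ω, eX ω / G ω ∂μ) ∧
    0 < (∫ ω, T ω / G ω ∂μ) ∧
    (∫ ω, (1 - T ω) / (1 - G ω) ∂μ) = (∫ ω, (1 - eX ω) / (1 - G ω) ∂μ) ∧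
    0 < (∫ ω, (1 - T ω) / (1 - G ω) ∂μ) ∧
    (∫ ω, T ω * Y ω / G ω ∂μ) / (∫ ω, T ω / G ω ∂μ)
        - (∫ ω, (1 - T ω) * Y ω / (1 - G ω) ∂μ)
            / (∫ ω, (1 - T ω) / (1 - G ω) ∂μ)
        - ((∫ ω, Y1 ω ∂μ) - ∫ ω, Y0 ω ∂μ)
      = (∫ ω, (eX ω / G ω) * μ1X ω ∂μ) / (∫ ω, eX ω / G ω ∂μ)
        - (∫ ω, ((1 - eX ω) / (1 - G ω)) * μ0X ω ∂μ)
            / (∫ ω, (1 - eX ω) / (1 - G ω) ∂μ)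
        - ((∫ ω, Y1 ω ∂μ) - ∫ ω, Y0 ω ∂μ) := by
  have hGmeas : Measurable G := hGm'.mono hm' le_rfl
  have hw1 : StronglyMeasurable[m'] (fun ω => (G ω)⁻¹) := (hGm'.inv).stronglyMeasurable
  have hw0 : StronglyMeasurable[m'] (fun ω => (1 - G ω)⁻¹) :=
    ((measurable_const.sub hGm').inv).stronglyMeasurable
  -- measurable modifications
  have hTae : AEStronglyMeasurable T μ := by
    have h1 : AEStronglyMeasurable (fun ω => G ω * (T ω / G ω)) μ :=
      hGmeas.aestronglyMeasurable.mul hint5.1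
    refine h1.congr ?_
    filter_upwards [hover'] with ω h
    have hg0 : G ω ≠ 0 := (hν.trans h.1).ne'
    rw [mul_comm, div_mul_cancel₀ _ hg0]
  have hTint : Integrable T μ :=
    (integrable_const (1:ℝ)).mono' hTae
      (Filter.Eventually.of_forall fun ω => by rcases hT01 ω with h | h <;> simp [h])
  obtain ⟨T', hT'sm, hTT'⟩ : ∃ T', StronglyMeasurable T' ∧ T =ᵐ[μ] T' :=
    ⟨hTae.mk T, hTae.stronglyMeasurable_mk, hTae.ae_eq_mk⟩
  have hT'meas : Measurable T' := hT'sm.measurable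
  obtain ⟨Y1', hY1'sm, hY1Y1'⟩ : ∃ Y1', StronglyMeasurable Y1' ∧ Y1 =ᵐ[μ] Y1' :=
    ⟨hY1int.1.mk Y1, hY1int.1.stronglyMeasurable_mk, hY1int.1.ae_eq_mk⟩
  have hY1'meas : Measurable Y1' := hY1'sm.measurable
  have hY1'int : Integrable Y1' μ := hY1int.congr hY1Y1'
  obtain ⟨Y0', hY0'sm, hY0Y0'⟩ : ∃ Y0', StronglyMeasurable Y0' ∧ Y0 =ᵐ[μ] Y0' :=
    ⟨hY0int.1.mk Y0, hY0int.1.stronglyMeasurable_mk, hY0int.1.ae_eq_mk⟩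
  have hY0'meas : Measurable Y0' := hY0'sm.measurable
  have hY0'int : Integrable Y0' μ := hY0int.congr hY0Y0'
  set A : Set Ω := T' ⁻¹' {1} with hAdef
  have hAmeas : MeasurableSet A := hT'meas (measurableSet_singleton 1)
  have hTind : T =ᵐ[μ] A.indicator (fun _ => (1:ℝ)) := by
    filter_upwards [hTT'] with ω hω
    rcases hT01 ω with h | h
    · have hne : T' ω ≠ 1 := by rw [← hω, h]; norm_num
      have : ω ∉ A := by simp [hAdef, Set.mem_preimage, hne]
      rw [Set.indicator_of_notMem this, h]
    · have hone : T' ω = 1 := by rw [← hω, h]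
      have : ω ∈ A := by simp [hAdef, Set.mem_preimage, hone]
      rw [Set.indicator_of_mem this, h]
  have heA : (μ⟦A | m'⟧) =ᵐ[μ] eX := (condExp_congr_ae hTind.symm).trans heX.symm
  have hTcind : (fun ω => 1 - T ω) =ᵐ[μ] Aᶜ.indicator (fun _ => (1:ℝ)) := by
    filter_upwards [hTind] with ω hω
    by_cases h : ω ∈ A
    · rw [Set.indicator_of_notMem (by simpa using h), hω, Set.indicator_of_mem h, sub_self]
    · rw [Set.indicator_of_mem (by simpa using h), hω, Set.indicator_of_notMem h, sub_zero]
  have h1mT : μ[(fun ω => 1 - T ω) | m'] =ᵐ[μ] fun ω => 1 - eX ω := by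
    have hs : μ[(fun ω => 1 - T ω) | m'] =ᵐ[μ]
        μ[(fun _ : Ω => (1:ℝ)) | m'] - μ[T | m'] :=
      condExp_sub (integrable_const (1:ℝ)) hTint m'
    refine hs.trans ?_
    have hc : μ[(fun _ : Ω => (1:ℝ)) | m'] = fun _ => (1:ℝ) := condExp_const hm' (1:ℝ)
    filter_upwards [heX] with ω h
    rw [Pi.sub_apply, hc, ← h]
  have heAc : (μ⟦Aᶜ | m'⟧) =ᵐ[μ] fun ω => 1 - eX ω :=
    (condExp_congr_ae hTcind.symm).trans h1mT
  -- conditional independence for the modifications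
  have hNUC1' : CondIndepFun m' hm' Y1' T' μ :=
    Kernel.IndepFun.congr' hNUC1
      (ae_trim_condexpKernel_ae_eq hm' hY1Y1')
      (ae_trim_condexpKernel_ae_eq hm' hTT')
  have hNUC0' : CondIndepFun m' hm' Y0' T' μ :=
    Kernel.IndepFun.congr' hNUC0
      (ae_trim_condexpKernel_ae_eq hm' hY0Y0')
      (ae_trim_condexpKernel_ae_eq hm' hTT')
  have hH1 := (condIndepFun_iff_condExp_inter_preimage_eq_mul
    (hm' := hm') hY1'meas hT'meas).mp hNUC1'
  have hH0 := (condIndepFun_iff_condExp_inter_preimage_eq_mul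
    (hm' := hm') hY0'meas hT'meas).mp hNUC0'
  have H1 : ∀ s : Set ℝ, MeasurableSet s →
      (μ⟦Y1' ⁻¹' s ∩ A | m'⟧) =ᵐ[μ] fun ω => (μ⟦Y1' ⁻¹' s | m'⟧) ω * (μ⟦A | m'⟧) ω :=
    fun s hs => hH1 s {1} hs (measurableSet_singleton 1)
  have H0 : ∀ s : Set ℝ, MeasurableSet s →
      (μ⟦Y0' ⁻¹' s ∩ Aᶜ | m'⟧) =ᵐ[μ] fun ω => (μ⟦Y0' ⁻¹' s | m'⟧) ω * (μ⟦Aᶜ | m'⟧) ω := by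
    intro s hs
    have h := hH0 s ({1}ᶜ) hs (measurableSet_singleton 1).compl
    rwa [Set.preimage_compl] at h
  have hkey1 := condExp_indicator_mul_of_factorize hm' hAmeas hY1'meas hY1'int H1
  have hkey0 := condExp_indicator_mul_of_factorize hm' hAmeas.compl hY0'meas hY0'int H0
  have hcY1 : μ[Y1' | m'] =ᵐ[μ] μ1X := (condExp_congr_ae hY1Y1'.symm).trans hμ1X.symm
  have hcY0 : μ[Y0' | m'] =ᵐ[μ] μ0X := (condExp_congr_ae hY0Y0'.symm).trans hμ0X.symm
  -- the swap identity
  have swap : ∀ (w Z : Ω → ℝ), StronglyMeasurable[m'] w → Integrable Z μ →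
      Integrable (fun ω => w ω * Z ω) μ →
      ∫ ω, w ω * Z ω ∂μ = ∫ ω, w ω * (μ[Z | m']) ω ∂μ := by
    intro w Z hw hZ hwZ
    have hpull : μ[w * Z | m'] =ᵐ[μ] w * μ[Z | m'] :=
      condExp_mul_of_stronglyMeasurable_left hw hwZ hZ
    calc ∫ ω, w ω * Z ω ∂μ
        = ∫ ω, (μ[fun ω => w ω * Z ω | m']) ω ∂μ := (integral_condExp (μ := μ) (f := fun ω => w ω * Z ω) hm').symm
      _ = ∫ ω, w ω * (μ[Z | m']) ω ∂μ := by
          refine integral_congr_ae ?_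
          filter_upwards [hpull] with ω h
          exact h
  -- Part A
  have eqA : (∫ ω, T ω / G ω ∂μ) = ∫ ω, eX ω / G ω ∂μ := by
    have hwT : Integrable (fun ω => (G ω)⁻¹ * T ω) μ :=
      hint5.congr (Filter.Eventually.of_forall fun ω => by
        simp only [div_eq_mul_inv]; ring)
    calc (∫ ω, T ω / G ω ∂μ)
        = ∫ ω, (G ω)⁻¹ * T ω ∂μ :=
          integral_congr_ae (Filter.Eventually.of_forall fun ω => by
            simp only [div_eq_mul_inv]; ring)
      _ = ∫ ω, (G ω)⁻¹ * (μ[T | m']) ω ∂μ := swap _ T hw1 hTint hwT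
      _ = ∫ ω, eX ω / G ω ∂μ := by
          refine integral_congr_ae ?_
          filter_upwards [heX] with ω h
          rw [← h, div_eq_mul_inv, mul_comm]
  -- Part B
  have h1Tint : Integrable (fun ω => 1 - T ω) μ := (integrable_const (1:ℝ)).sub hTint
  have eqB : (∫ ω, (1 - T ω) / (1 - G ω) ∂μ) = ∫ ω, (1 - eX ω) / (1 - G ω) ∂μ := by
    have hwT : Integrable (fun ω => (1 - G ω)⁻¹ * (1 - T ω)) μ :=
      hint6.congr (Filter.Eventually.of_forall fun ω => by
        simp only [div_eq_mul_inv]; ring)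
    calc (∫ ω, (1 - T ω) / (1 - G ω) ∂μ)
        = ∫ ω, (1 - G ω)⁻¹ * (1 - T ω) ∂μ :=
          integral_congr_ae (Filter.Eventually.of_forall fun ω => by
            simp only [div_eq_mul_inv]; ring)
      _ = ∫ ω, (1 - G ω)⁻¹ * (μ[(fun ω => 1 - T ω) | m']) ω ∂μ :=
          swap _ (fun ω => 1 - T ω) hw0 h1Tint hwT
      _ = ∫ ω, (1 - eX ω) / (1 - G ω) ∂μ := by
          refine integral_congr_ae ?_
          filter_upwards [h1mT] with ω h
          rw [h, div_eq_mul_inv, mul_comm]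
  -- Part C
  have hTY : ∀ ω, T ω * Y ω = T ω * Y1 ω := by
    intro ω; rw [hY]; rcases hT01 ω with h | h <;> simp [h]
  have hind1 : (fun ω => T ω * Y1 ω) =ᵐ[μ] fun ω => A.indicator Y1' ω := by
    filter_upwards [hTT', hY1Y1'] with ω h1 h2
    by_cases h : ω ∈ A
    · have hone : T' ω = 1 := by simpa [hAdef] using h
      rw [Set.indicator_of_mem h, ← h2, h1, hone, one_mul]
    · have hne : T' ω ≠ 1 := by simpa [hAdef] using h
      have hzero : T ω = 0 := by
        rcases hT01 ω with h0 | h0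
        · exact h0
        · exact absurd (h1 ▸ h0 : T' ω = 1) hne
      rw [Set.indicator_of_notMem h, hzero, zero_mul]
  have eqC : (∫ ω, T ω * Y ω / G ω ∂μ) = ∫ ω, (eX ω / G ω) * μ1X ω ∂μ := by
    have hptC : (fun ω => T ω * Y ω / G ω) =ᵐ[μ]
        fun ω => (G ω)⁻¹ * A.indicator Y1' ω := by
      filter_upwards [hind1] with ω h
      rw [hTY ω, div_eq_mul_inv, mul_comm, h]
    have hwZint : Integrable (fun ω => (G ω)⁻¹ * A.indicator Y1' ω) μ :=
      hint1.congr hptC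
    calc (∫ ω, T ω * Y ω / G ω ∂μ)
        = ∫ ω, (G ω)⁻¹ * A.indicator Y1' ω ∂μ := integral_congr_ae hptC
      _ = ∫ ω, (G ω)⁻¹ * (μ[A.indicator Y1' | m']) ω ∂μ :=
          swap _ (A.indicator Y1') hw1 (hY1'int.indicator hAmeas) hwZint
      _ = ∫ ω, (eX ω / G ω) * μ1X ω ∂μ := by
          refine integral_congr_ae ?_
          filter_upwards [hkey1, heA, hcY1] with ω h1 h2 h3
          rw [h1, h2, h3, div_eq_mul_inv]
          ring
  -- Part D
  have hTY0 : ∀ ω, (1 - T ω) * Y ω = (1 - T ω) * Y0 ω := by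
    intro ω; rw [hY]; rcases hT01 ω with h | h <;> simp [h]
  have hind0 : (fun ω => (1 - T ω) * Y0 ω) =ᵐ[μ] fun ω => Aᶜ.indicator Y0' ω := by
    filter_upwards [hTcind, hY0Y0'] with ω h1 h2
    by_cases h : ω ∈ A
    · have hz : Aᶜ.indicator (fun _ => (1:ℝ)) ω = 0 :=
        Set.indicator_of_notMem (by simpa using h) _
      rw [Set.indicator_of_notMem (by simpa using h), h1, hz, zero_mul]
    · have ho : Aᶜ.indicator (fun _ => (1:ℝ)) ω = 1 :=
        Set.indicator_of_mem (by simpa using h) _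
      rw [Set.indicator_of_mem (by simpa using h), h1, ho, one_mul, h2]
  have eqD : (∫ ω, (1 - T ω) * Y ω / (1 - G ω) ∂μ)
      = ∫ ω, ((1 - eX ω) / (1 - G ω)) * μ0X ω ∂μ := by
    have hptD : (fun ω => (1 - T ω) * Y ω / (1 - G ω)) =ᵐ[μ]
        fun ω => (1 - G ω)⁻¹ * Aᶜ.indicator Y0' ω := by
      filter_upwards [hind0] with ω h
      rw [hTY0 ω, div_eq_mul_inv, mul_comm, h]
    have hwZint : Integrable (fun ω => (1 - G ω)⁻¹ * Aᶜ.indicator Y0' ω) μ :=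
      hint2.congr hptD
    calc (∫ ω, (1 - T ω) * Y ω / (1 - G ω) ∂μ)
        = ∫ ω, (1 - G ω)⁻¹ * Aᶜ.indicator Y0' ω ∂μ := integral_congr_ae hptD
      _ = ∫ ω, (1 - G ω)⁻¹ * (μ[Aᶜ.indicator Y0' | m']) ω ∂μ :=
          swap _ (Aᶜ.indicator Y0') hw0 (hY0'int.indicator hAmeas.compl) hwZint
      _ = ∫ ω, ((1 - eX ω) / (1 - G ω)) * μ0X ω ∂μ := by
          refine integral_congr_ae ?_
          filter_upwards [hkey0, heAc, hcY0] with ω h1 h2 h3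
          rw [h1, h2, h3, div_eq_mul_inv]
          ring
  -- positivity
  have posA : 0 < ∫ ω, eX ω / G ω ∂μ := by
    have hge : ∀ᵐ ω ∂μ, η ≤ eX ω / G ω := by
      filter_upwards [hover, hover'] with ω h1 h2
      have hg0 : 0 < G ω := hν.trans h2.1
      rw [le_div_iff₀ hg0]
      nlinarith [h1.1, h2.2, hη.le, hν.le]
    have hmono := integral_mono_ae (integrable_const η) hint7 hge
    have hconst : ∫ _ : Ω, η ∂μ = η := by simp
    rw [hconst] at hmono
    linarith
  have posB : 0 < ∫ ω, (1 - eX ω) / (1 - G ω) ∂μ := by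
    have hge : ∀ᵐ ω ∂μ, η ≤ (1 - eX ω) / (1 - G ω) := by
      filter_upwards [hover, hover'] with ω h1 h2
      have hg0 : 0 < 1 - G ω := by linarith [h2.2]
      rw [le_div_iff₀ hg0]
      nlinarith [h1.2, h2.1, hη.le, hν.le]
    have hmono := integral_mono_ae (integrable_const η) hint8 hge
    have hconst : ∫ _ : Ω, η ∂μ = η := by simp
    rw [hconst] at hmono
    linarith
  refine ⟨eqA, ?_, eqB, ?_, ?_⟩
  · rw [eqA]; exact posA
  · rw [eqB]; exact posB
  · rw [eqA, eqB, eqC, eqD]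



/-- Theorem 2: bias of the normalized IPW estimator under a misspecified propensity score.
The normalizing denominators satisfy `E[T/e*(X)] = E[e(X)/e*(X)] > 0` and
`E[(1−T)/(1−e*(X))] = E[(1−e(X))/(1−e*(X))] > 0`, and
`E[T·Y/e*(X)]/E[T/e*(X)] − E[(1−T)·Y/(1−e*(X))]/E[(1−T)/(1−e*(X))] − Δ
  = E[(e(X)/e*(X))·μ1(X)]/E[e(X)/e*(X)]
    − E[((1−e(X))/(1−e*(X)))·μ0(X)]/E[(1−e(X))/(1−e*(X))] − (μ1 − μ0)`. -/
theorem bias_ipw2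
    {Ω : Type*} [MeasurableSpace Ω] [StandardBorelSpace Ω]
    {𝓧 : Type*} [MeasurableSpace 𝓧]
    (μ : Measure Ω) [IsProbabilityMeasure μ]
    (X : Ω → 𝓧) (hX : Measurable X)
    (T Y0 Y1 : Ω → ℝ)
    (hT01 : ∀ ω, T ω = 0 ∨ T ω = 1)
    (hY0int : Integrable Y0 μ) (hY1int : Integrable Y1 μ)
    (Y : Ω → ℝ) (hY : Y = fun ω => T ω * Y1 ω + (1 - T ω) * Y0 ω)
    -- no unmeasured confounding: Y(t) ⟂ T | σ(X), t = 0, 1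
    (hNUC0 : CondIndepFun (MeasurableSpace.comap X inferInstance) hX.comap_le Y0 T μ)
    (hNUC1 : CondIndepFun (MeasurableSpace.comap X inferInstance) hX.comap_le Y1 T μ)
    -- e(X): a version of P(T = 1 | σ(X)) = E[T | σ(X)]
    (eX : Ω → ℝ) (heX : eX =ᵐ[μ] μ[T | MeasurableSpace.comap X inferInstance])
    -- μt(X): versions of E[Y(t) | σ(X)], t = 0, 1
    (μ0X : Ω → ℝ) (hμ0X : μ0X =ᵐ[μ] μ[Y0 | MeasurableSpace.comap X inferInstance])
    (μ1X : Ω → ℝ) (hμ1X : μ1X =ᵐ[μ] μ[Y1 | MeasurableSpace.comap X inferInstance])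
    -- overlap for the true propensity score
    (η : ℝ) (hη : 0 < η)
    (hover : ∀ᵐ ω ∂μ, η < eX ω ∧ eX ω < 1 - η)
    -- misspecified propensity score e*(X) = g(X) and overlap under misspecification
    (g : 𝓧 → ℝ) (hg : Measurable g)
    (ν : ℝ) (hν : 0 < ν)
    (hover' : ∀ᵐ ω ∂μ, ν < g (X ω) ∧ g (X ω) < 1 - ν)
    -- integrability of the displayed functionals
    (hint1 : Integrable (fun ω => T ω * Y ω / g (X ω)) μ)
    (hint2 : Integrable (fun ω => (1 - T ω) * Y ω / (1 - g (X ω))) μ)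
    (hint3 : Integrable (fun ω => (eX ω / g (X ω)) * μ1X ω) μ)
    (hint4 : Integrable (fun ω => ((1 - eX ω) / (1 - g (X ω))) * μ0X ω) μ)
    (hint5 : Integrable (fun ω => T ω / g (X ω)) μ)
    (hint6 : Integrable (fun ω => (1 - T ω) / (1 - g (X ω))) μ)
    (hint7 : Integrable (fun ω => eX ω / g (X ω)) μ)
    (hint8 : Integrable (fun ω => (1 - eX ω) / (1 - g (X ω))) μ) :
    (∫ ω, T ω / g (X ω) ∂μ) = (∫ ω, eX ω / g (X ω) ∂μ) ∧
    0 < (∫ ω, T ω / g (X ω) ∂μ) ∧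
    (∫ ω, (1 - T ω) / (1 - g (X ω)) ∂μ) = (∫ ω, (1 - eX ω) / (1 - g (X ω)) ∂μ) ∧
    0 < (∫ ω, (1 - T ω) / (1 - g (X ω)) ∂μ) ∧
    (∫ ω, T ω * Y ω / g (X ω) ∂μ) / (∫ ω, T ω / g (X ω) ∂μ)
        - (∫ ω, (1 - T ω) * Y ω / (1 - g (X ω)) ∂μ)
            / (∫ ω, (1 - T ω) / (1 - g (X ω)) ∂μ)
        - ((∫ ω, Y1 ω ∂μ) - ∫ ω, Y0 ω ∂μ)
      = (∫ ω, (eX ω / g (X ω)) * μ1X ω ∂μ) / (∫ ω, eX ω / g (X ω) ∂μ)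
        - (∫ ω, ((1 - eX ω) / (1 - g (X ω))) * μ0X ω ∂μ)
            / (∫ ω, (1 - eX ω) / (1 - g (X ω)) ∂μ)
        - ((∫ ω, Y1 ω ∂μ) - ∫ ω, Y0 ω ∂μ) := by
  have hXm' : Measurable[MeasurableSpace.comap X inferInstance] X := fun s hs => ⟨s, hs, rfl⟩
  exact bias_ipw2_aux hX.comap_le μ T Y0 Y1 hT01 hY0int hY1int Y hY hNUC0 hNUC1
    eX heX μ0X hμ0X μ1X hμ1X η hη hover (fun ω => g (X ω)) (hg.comp hXm')
    ν hν hover' hint1 hint2 hint5 hint6 hint7 hint8
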